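/- Let H₁ and H₂ be Hilbert spaces, R : H₂ → H₁ a bounded linear operator with ‖R R*‖ ≤ 1, and T : H₂ → H₂ a bounded self-adjoint positive operator with ‖T‖ ≤ 1. Then for every integer k ≥ 1, ‖R T R*‖^{2k} ≤ ‖R T^k R*‖. -/

import Mathlib

set_option maxHeartbeats 1000000

open ContinuousLinearMap

section aux
variable {H : Type*} [NormedAddCommGroup H] [InnerProductSpace ℝ H] [CompleteSpace H]

lemma cs_pos_aux (T : H →L[ℝ] H) (hT : IsSelfAdjoint T)
    (hTpos : ∀ g : H, 0 ≤ (inner ℝ (T g) g : ℝ)) (x y : H) :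
    (inner ℝ (T x) y : ℝ) ^ 2 ≤ (inner ℝ (T x) x : ℝ) * (inner ℝ (T y) y : ℝ) := by
  have hsym : (inner ℝ (T y) x : ℝ) = inner ℝ (T x) y := by
    have h1 : (inner ℝ (T y) x : ℝ) = inner ℝ y (T x) := hT.isSymmetric y x
    rw [h1, real_inner_comm]
  have h : ∀ t : ℝ, 0 ≤ (inner ℝ (T y) y : ℝ) * (t * t) + (2 * (inner ℝ (T x) y : ℝ)) * t
      + (inner ℝ (T x) x : ℝ) := by
    intro t
    have h0 := hTpos (x + t • y)
    have e : (inner ℝ (T (x + t • y)) (x + t • y) : ℝ)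
        = (inner ℝ (T y) y : ℝ) * (t * t) + (2 * (inner ℝ (T x) y : ℝ)) * t
          + (inner ℝ (T x) x : ℝ) := by
      simp only [map_add, map_smul, inner_add_left, inner_add_right,
        real_inner_smul_left, real_inner_smul_right]
      rw [hsym]; ring
    linarith [e ▸ h0]
  have hd := discrim_le_zero h
  rw [discrim] at hd
  nlinarith
end aux

section aux2
variable {H : Type*} [NormedAddCommGroup H] [InnerProductSpace ℝ H] [CompleteSpace H]

lemma inner_pow_le_inner_pow (T : H →L[ℝ] H) (hT : IsSelfAdjoint T)
    (hTpos : ∀ g : H, 0 ≤ (inner ℝ (T g) g : ℝ)) (hTnorm : ‖T‖ ≤ 1)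
    (g : H) (hg : ‖g‖ ≤ 1) (k : ℕ) (hk : 1 ≤ k) :
    (inner ℝ (T g) g : ℝ) ^ k ≤ (inner ℝ ((T ^ k) g) g : ℝ) := by
  set a : ℕ → ℝ := fun m => (inner ℝ ((T ^ m) g) g : ℝ) with ha
  have hsplit : ∀ p q : ℕ, a (p + q) = (inner ℝ ((T ^ p) g) ((T ^ q) g) : ℝ) := by
    intro p q
    have h1 : (T ^ (p + q)) g = (T ^ p) ((T ^ q) g) := by
      rw [pow_add]; rfl
    have h2 : (inner ℝ ((T ^ p) ((T ^ q) g)) g : ℝ) = inner ℝ ((T ^ q) g) ((T ^ p) g) :=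
      (hT.pow p).isSymmetric _ _
    rw [ha]; simp only []
    rw [h1, h2, real_inner_comm]
  have hsucc : ∀ p : ℕ, (T ^ (p + 1)) g = T ((T ^ p) g) := by
    intro p; rw [pow_succ']; rfl
  have hnn : ∀ m : ℕ, 0 ≤ a m := by
    intro m
    rcases Nat.even_or_odd m with ⟨p, hp⟩ | ⟨p, hp⟩
    · rw [hp, hsplit p p]; exact real_inner_self_nonneg
    · have : m = (p + 1) + p := by omega
      rw [this, hsplit (p + 1) p, hsucc p]
      exact hTpos _
  have hbound : ∀ m : ℕ, a m ≤ 1 := by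
    intro m
    have h1 : a m ≤ ‖(T ^ m) g‖ * ‖g‖ := real_inner_le_norm _ _
    have h2 : ‖(T ^ m) g‖ ≤ ‖T ^ m‖ * ‖g‖ := le_opNorm _ _
    have h3 : ‖T ^ m‖ ≤ 1 := by
      rcases Nat.eq_zero_or_pos m with h | h
      · rw [h, pow_zero, ContinuousLinearMap.one_def]
        exact ContinuousLinearMap.norm_id_le
      · exact (norm_pow_le' T h).trans (pow_le_one₀ (norm_nonneg T) hTnorm)
    nlinarith [norm_nonneg g, norm_nonneg ((T ^ m) g), norm_nonneg (T ^ m)]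
  have evenCS : ∀ p q : ℕ, a (p + q) ^ 2 ≤ a (p + p) * a (q + q) := by
    intro p q
    rw [hsplit p q, hsplit p p, hsplit q q]
    have := real_inner_mul_inner_self_le ((T ^ p) g) ((T ^ q) g)
    nlinarith [this]
  have oddCS : ∀ p q : ℕ, a (p + q + 1) ^ 2 ≤ a (p + p + 1) * a (q + q + 1) := by
    intro p q
    have e1 : p + q + 1 = (p + 1) + q := by omega
    have e2 : p + p + 1 = (p + 1) + p := by omega
    have e3 : q + q + 1 = (q + 1) + q := by omega
    rw [e1, hsplit (p + 1) q, e2, hsplit (p + 1) p, e3, hsplit (q + 1) q,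
      hsucc p, hsucc q]
    have := cs_pos_aux T hT hTpos ((T ^ p) g) ((T ^ q) g)
    nlinarith [this]
  have key : ∀ k : ℕ, 1 ≤ k → a 1 ^ k ≤ a k := by
    intro k
    induction k using Nat.strong_induction_on with
    | _ k ih =>
      intro hk
      rcases Nat.even_or_odd k with ⟨m, hm⟩ | ⟨m, hm⟩
      · have hm1 : 1 ≤ m := by omega
        have h1 : a 1 ^ m ≤ a m := ih m (by omega) hm1
        have h2 : a m ^ 2 ≤ a (m + m) * a 0 := by
          have := evenCS m 0; simpa using this
        calc a 1 ^ k = (a 1 ^ m) ^ 2 := by rw [hm]; ring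
          _ ≤ (a m) ^ 2 := pow_le_pow_left₀ (pow_nonneg (hnn 1) m) h1 2
          _ ≤ a (m + m) * a 0 := h2
          _ ≤ a (m + m) := mul_le_of_le_one_right (hnn _) (hbound 0)
          _ = a k := by rw [hm]
      · rcases Nat.eq_zero_or_pos m with hm0 | hm0
        · subst hm0; simp only [mul_zero, zero_add] at hm; rw [hm, pow_one]
        · have h1 : a 1 ^ (m + 1) ≤ a (m + 1) := ih (m + 1) (by omega) (by omega)
          have h2 : a (m + 1) ^ 2 ≤ a (m + m + 1) * a 1 := by
            have := oddCS m 0; simpa using this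
          have hpow : a 1 ^ (m + m + 1) * a 1 ≤ a (m + m + 1) * a 1 := by
            calc a 1 ^ (m + m + 1) * a 1 = (a 1 ^ (m + 1)) ^ 2 := by ring
              _ ≤ (a (m + 1)) ^ 2 := pow_le_pow_left₀ (pow_nonneg (hnn 1) _) h1 2
              _ ≤ a (m + m + 1) * a 1 := h2
          have hk' : k = m + m + 1 := by omega
          rw [hk']
          rcases eq_or_lt_of_le (hnn 1) with h0 | h0
          · rw [← h0, zero_pow (by omega)]; exact hnn _
          · exact le_of_mul_le_mul_right hpow h0
  have h1 : a 1 = (inner ℝ (T g) g : ℝ) := by rw [ha]; simp [pow_one]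
  calc (inner ℝ (T g) g : ℝ) ^ k = a 1 ^ k := by rw [h1]
    _ ≤ a k := key k hk
end aux2

/-- For a bounded operator `R : H₂ → H₁` with `‖R R*‖ ≤ 1` and a
bounded self-adjoint positive operator `T` on `H₂` with `‖T‖ ≤ 1`,
`‖R T R*‖^{2k} ≤ ‖R T^k R*‖` for every integer `k ≥ 1`. -/
theorem norm_RTR_pow_le
    {H₁ H₂ : Type*} [NormedAddCommGroup H₁] [InnerProductSpace ℝ H₁] [CompleteSpace H₁]
    [NormedAddCommGroup H₂] [InnerProductSpace ℝ H₂] [CompleteSpace H₂]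
    (R : H₂ →L[ℝ] H₁) (hR : ‖R ∘L adjoint R‖ ≤ 1) (T : H₂ →L[ℝ] H₂)
    (hT : IsSelfAdjoint T) (hTpos : ∀ g : H₂, 0 ≤ (inner ℝ (T g) g : ℝ)) (hTnorm : ‖T‖ ≤ 1)
    (k : ℕ) (hk : 1 ≤ k) :
    ‖R ∘L T ∘L adjoint R‖ ^ (2 * k) ≤ ‖R ∘L (T ^ k) ∘L adjoint R‖ := by
  set S := R ∘L T ∘L adjoint R with hSdef
  set C := ‖R ∘L (T ^ k) ∘L adjoint R‖ with hCdef
  have hC0 : 0 ≤ C := norm_nonneg _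
  have h2k : (2 * k : ℕ) ≠ 0 := by omega
  -- norm of adjoint R
  have hadj : ‖adjoint R‖ = ‖R‖ := by
    exact LinearIsometryEquiv.norm_map (adjoint : (H₂ →L[ℝ] H₁) ≃ₗᵢ⋆[ℝ] (H₁ →L[ℝ] H₂)) R
  have hRR : ‖R ∘L adjoint R‖ = ‖adjoint R‖ * ‖adjoint R‖ := by
    have := norm_adjoint_comp_self (adjoint R)
    rwa [adjoint_adjoint] at this
  have hadj1 : ‖adjoint R‖ ≤ 1 := by nlinarith [norm_nonneg (adjoint R)]
  have hR1 : ‖R‖ ≤ 1 := hadj ▸ hadj1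
  -- S is positive and of norm ≤ 1
  have hTp : T.IsPositive := ⟨hT.isSymmetric, fun x => hTpos x⟩
  have hSpos : S.IsPositive := hTp.conj_adjoint R
  have hSnorm : ‖S‖ ≤ 1 := by
    calc ‖S‖ ≤ ‖R‖ * ‖T ∘L adjoint R‖ := opNorm_comp_le _ _
      _ ≤ ‖R‖ * (‖T‖ * ‖adjoint R‖) := by
          exact mul_le_mul_of_nonneg_left (opNorm_comp_le _ _) (norm_nonneg R)
      _ ≤ 1 := by
          have h1 : ‖R‖ * ‖adjoint R‖ ≤ 1 := by
            calc ‖R‖ * ‖adjoint R‖ = ‖adjoint R‖ * ‖adjoint R‖ := by rw [hadj]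
              _ = ‖R ∘L adjoint R‖ := hRR.symm
              _ ≤ 1 := hR
          nlinarith [h1, hTnorm, norm_nonneg T, norm_nonneg R, norm_nonneg (adjoint R)]
  have hSsa : IsSelfAdjoint S := hSpos.isSelfAdjoint
  have hSp : ∀ x : H₁, 0 ≤ (inner ℝ (S x) x : ℝ) := fun x => hSpos.inner_nonneg_left x
  -- pointwise bound on unit vectors
  have main : ∀ f : H₁, ‖f‖ = 1 → ‖S f‖ ≤ C ^ ((2 * k : ℕ) : ℝ)⁻¹ := by
    intro f hf
    set g := adjoint R f with hgdef
    have hg1 : ‖g‖ ≤ 1 := by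
      have e : ‖g‖ * ‖g‖ = (inner ℝ ((R ∘L adjoint R) f) f : ℝ) := by
        rw [← real_inner_self_eq_norm_mul_norm]
        exact adjoint_inner_right R g f
      have hle : (inner ℝ ((R ∘L adjoint R) f) f : ℝ) ≤ 1 := by
        calc (inner ℝ ((R ∘L adjoint R) f) f : ℝ) ≤ ‖(R ∘L adjoint R) f‖ * ‖f‖ :=
              real_inner_le_norm _ _
          _ ≤ ‖R ∘L adjoint R‖ * ‖f‖ * ‖f‖ := by
              have := le_opNorm (R ∘L adjoint R) f; nlinarith [norm_nonneg f]
          _ ≤ 1 := by rw [hf]; simpa using hR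
      nlinarith [norm_nonneg g, e ▸ hle]
    -- ⟨S f, f⟩ = ⟨T g, g⟩
    have hinner : (inner ℝ (S f) f : ℝ) = inner ℝ (T g) g := by
      have : S f = R (T g) := rfl
      rw [this, ← adjoint_inner_right R (T g) f]
    -- ‖S f‖² ≤ ⟨S f, f⟩
    have hnormsq : ‖S f‖ ^ 2 ≤ (inner ℝ (S f) f : ℝ) := by
      have hcs := cs_pos_aux S hSsa hSp f (S f)
      have h1 : (inner ℝ (S f) (S f) : ℝ) = ‖S f‖ ^ 2 := real_inner_self_eq_norm_sq _
      have h2 : (inner ℝ (S (S f)) (S f) : ℝ) ≤ ‖S f‖ ^ 2 := by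
        calc (inner ℝ (S (S f)) (S f) : ℝ) ≤ ‖S (S f)‖ * ‖S f‖ := real_inner_le_norm _ _
          _ ≤ ‖S‖ * ‖S f‖ * ‖S f‖ := by
              have := le_opNorm S (S f); nlinarith [norm_nonneg (S f)]
          _ ≤ ‖S f‖ ^ 2 := by nlinarith [norm_nonneg (S f), norm_nonneg S]
      rw [h1] at hcs
      rcases eq_or_lt_of_le (norm_nonneg (S f)) with h0 | h0
      · rw [← h0]; simpa [← h0] using hSp f
      · have hsq : (0 : ℝ) < ‖S f‖ ^ 2 := by positivity
        nlinarith [hSp f, hSp (S f)]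
    -- power inequality
    have hpow : (inner ℝ (T g) g : ℝ) ^ k ≤ (inner ℝ ((T ^ k) g) g : ℝ) :=
      inner_pow_le_inner_pow T hT hTpos hTnorm g hg1 k hk
    -- final bound
    have hCk : (inner ℝ ((T ^ k) g) g : ℝ) ≤ C := by
      have e : (inner ℝ ((T ^ k) g) g : ℝ) = inner ℝ ((R ∘L (T ^ k) ∘L adjoint R) f) f := by
        simp only [hgdef, ContinuousLinearMap.comp_apply]
        exact adjoint_inner_right R _ f
      rw [e]
      calc (inner ℝ ((R ∘L (T ^ k) ∘L adjoint R) f) f : ℝ)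
          ≤ ‖(R ∘L (T ^ k) ∘L adjoint R) f‖ * ‖f‖ := real_inner_le_norm _ _
        _ ≤ C := by
            have := le_opNorm (R ∘L (T ^ k) ∘L adjoint R) f
            rw [hf] at this ⊢; simpa using this
    have hfinal : ‖S f‖ ^ (2 * k) ≤ C := by
      calc ‖S f‖ ^ (2 * k) = (‖S f‖ ^ 2) ^ k := by rw [← pow_mul]
        _ ≤ (inner ℝ (S f) f : ℝ) ^ k :=
            pow_le_pow_left₀ (by positivity) hnormsq k
        _ = (inner ℝ (T g) g : ℝ) ^ k := by rw [hinner]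
        _ ≤ (inner ℝ ((T ^ k) g) g : ℝ) := hpow
        _ ≤ C := hCk
    have := Real.rpow_le_rpow (by positivity) hfinal (by positivity : (0:ℝ) ≤ ((2*k : ℕ) : ℝ)⁻¹)
    rwa [Real.pow_rpow_inv_natCast (norm_nonneg _) h2k] at this
  have hSle : ‖S‖ ≤ C ^ ((2 * k : ℕ) : ℝ)⁻¹ :=
    opNorm_le_of_unit_norm (Real.rpow_nonneg hC0 _) main
  calc ‖S‖ ^ (2 * k) ≤ (C ^ ((2 * k : ℕ) : ℝ)⁻¹) ^ (2 * k) :=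
        pow_le_pow_left₀ (norm_nonneg S) hSle _
    _ = C := Real.rpow_inv_natCast_pow hC0 h2k
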